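/- Let F : ℝ^N → ℝ^N be continuously differentiable and K ⊆ ℝ^N. Let X = ℝ^N × ℝ^N × [0,∞), let G_K = {(x,y,t) ∈ X : |y−x| ≤ t·‖F‖_K and |y−x−t·F(x)| ≤ (t²/2)·‖(DF)F‖_K}, let R_K = {(x,y,t) ∈ X : x →_{F,K,t} y}, and define Γ_K : 𝒫(X) → 𝒫(X) by Γ_K(Z) = {(x,y,t) ∈ G_K : x ∈ K, y ∈ K, and ∃u ∈ ℝ^N with (x,u,t/2) ∈ Z and (u,y,t/2) ∈ Z}. Then Γ_K is monotone, and if K is compact then R_K is the greatest fixpoint of Γ_K; in particular R_K = Γ_K(R_K), and Z ⊆ R_K for every Z ⊆ X with Z ⊆ Γ_K(Z). -/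

import Mathlib

open Set intervalIntegral Filter Topology MeasureTheory

namespace ODEGfp

/-- `γ` is an integral curve of `F` on `[0, t]`: it is continuous on `[0, t]` and
differentiable on `(0, t)` with derivative `γ'(s) = F(γ(s))`. -/
def IsIntCurve {N : ℕ} (F : EuclideanSpace ℝ (Fin N) → EuclideanSpace ℝ (Fin N))
    (t : ℝ) (γ : ℝ → EuclideanSpace ℝ (Fin N)) : Prop :=
  ContinuousOn γ (Set.Icc 0 t) ∧ ∀ s ∈ Set.Ioo 0 t, HasDerivAt γ (F (γ s)) s

/-- `x →_{F,K,t} y`: `y` is `t`-reachable from `x` along `F` within `K`. -/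
def Reach {N : ℕ} (F : EuclideanSpace ℝ (Fin N) → EuclideanSpace ℝ (Fin N))
    (K : Set (EuclideanSpace ℝ (Fin N))) (t : ℝ)
    (x y : EuclideanSpace ℝ (Fin N)) : Prop :=
  ∃ γ : ℝ → EuclideanSpace ℝ (Fin N), IsIntCurve F t γ ∧ γ 0 = x ∧ γ t = y ∧
    ∀ s ∈ Set.Icc 0 t, γ s ∈ K

/-- The sup-norm `‖G‖_K = sup_{z ∈ K} |G z|`, valued in `[0, ∞]`. -/
noncomputable def supNorm {N : ℕ}
    (G : EuclideanSpace ℝ (Fin N) → EuclideanSpace ℝ (Fin N))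
    (K : Set (EuclideanSpace ℝ (Fin N))) : ENNReal :=
  ⨆ z ∈ K, (‖G z‖₊ : ENNReal)

/-- The reachability set `R_K ⊆ X = ℝ^N × ℝ^N × [0,∞)`. -/
def RK {N : ℕ} (F : EuclideanSpace ℝ (Fin N) → EuclideanSpace ℝ (Fin N))
    (K : Set (EuclideanSpace ℝ (Fin N))) :
    Set (EuclideanSpace ℝ (Fin N) × EuclideanSpace ℝ (Fin N) × ℝ) :=
  {p | 0 ≤ p.2.2 ∧ Reach F K p.2.2 p.1 p.2.1}

/-- The set `G_K` of triples within the Taylor growth bounds. -/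
def GK {N : ℕ} (F : EuclideanSpace ℝ (Fin N) → EuclideanSpace ℝ (Fin N))
    (K : Set (EuclideanSpace ℝ (Fin N))) :
    Set (EuclideanSpace ℝ (Fin N) × EuclideanSpace ℝ (Fin N) × ℝ) :=
  {p | 0 ≤ p.2.2 ∧
    (‖p.2.1 - p.1‖₊ : ENNReal) ≤ ENNReal.ofReal p.2.2 * supNorm F K ∧
    (‖p.2.1 - p.1 - p.2.2 • F p.1‖₊ : ENNReal)
      ≤ ENNReal.ofReal (p.2.2 ^ 2 / 2) * supNorm (fun z => fderiv ℝ F z (F z)) K}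

/-- The monotone map `Γ_K`. -/
def GammaK {N : ℕ} (F : EuclideanSpace ℝ (Fin N) → EuclideanSpace ℝ (Fin N))
    (K : Set (EuclideanSpace ℝ (Fin N)))
    (Z : Set (EuclideanSpace ℝ (Fin N) × EuclideanSpace ℝ (Fin N) × ℝ)) :
    Set (EuclideanSpace ℝ (Fin N) × EuclideanSpace ℝ (Fin N) × ℝ) :=
  {p | p ∈ GK F K ∧ p.1 ∈ K ∧ p.2.1 ∈ K ∧
    ∃ u : EuclideanSpace ℝ (Fin N),
      (p.1, u, p.2.2 / 2) ∈ Z ∧ (u, p.2.1, p.2.2 / 2) ∈ Z}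

section Aux

variable {E : Type*} [NormedAddCommGroup E] [NormedSpace ℝ E] [CompleteSpace E]

/-- Mean value inequality with derivative only on the open interval. -/
private lemma mv_ioo {f φ : ℝ → E} {B B' : ℝ → ℝ} {a b : ℝ} (hab : a ≤ b)
    (hf : ContinuousOn f (Icc a b)) (hf' : ∀ s ∈ Ioo a b, HasDerivAt f (φ s) s)
    (hB : ContinuousOn B (Icc a b)) (hB' : ∀ s ∈ Ioo a b, HasDerivAt B (B' s) s)
    (hb : ∀ s ∈ Ioo a b, ‖φ s‖ ≤ B' s) : ‖f b - f a‖ ≤ B b - B a := by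
  rcases eq_or_lt_of_le hab with rfl | hab
  · simp
  have key : ∀ c ∈ Ioo a b, ‖f b - f c‖ ≤ B b - B c := by
    intro c hc
    have h1 : ContinuousOn (fun s => f s - f c) (Icc c b) :=
      (hf.mono (Icc_subset_Icc hc.1.le le_rfl)).sub continuousOn_const
    have h2 : ∀ s ∈ Ico c b, HasDerivWithinAt (fun s => f s - f c) (φ s) (Ici s) s := by
      intro s hs
      exact ((hf' s ⟨hc.1.trans_le hs.1, hs.2⟩).sub_const _).hasDerivWithinAt
    have h3 : ContinuousOn (fun s => B s - B c) (Icc c b) :=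
      (hB.mono (Icc_subset_Icc hc.1.le le_rfl)).sub continuousOn_const
    have h4 : ∀ s ∈ Ico c b, HasDerivWithinAt (fun s => B s - B c) (B' s) (Ici s) s := by
      intro s hs
      exact ((hB' s ⟨hc.1.trans_le hs.1, hs.2⟩).sub_const _).hasDerivWithinAt
    have := image_norm_le_of_norm_deriv_right_le_deriv_boundary' h1 h2
      (by simp) h3 h4 (fun s hs => hb s ⟨hc.1.trans_le hs.1, hs.2⟩)
      (right_mem_Icc.2 hc.2.le)
    simpa using this
  have hne : (𝓝[Ioo a b] a).NeBot := by
    refine mem_closure_iff_nhdsWithin_neBot.1 ?_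
    rw [closure_Ioo hab.ne]
    exact left_mem_Icc.2 hab.le
  have hmem : a ∈ Icc a b := left_mem_Icc.2 hab.le
  have t1 : Filter.Tendsto (fun c => ‖f b - f c‖) (𝓝[Ioo a b] a) (𝓝 ‖f b - f a‖) := by
    have : Filter.Tendsto f (𝓝[Ioo a b] a) (𝓝 (f a)) :=
      (hf a hmem).mono_left (nhdsWithin_mono _ Ioo_subset_Icc_self)
    exact (tendsto_const_nhds.sub this).norm
  have t2 : Filter.Tendsto (fun c => B b - B c) (𝓝[Ioo a b] a) (𝓝 (B b - B a)) := by
    have : Filter.Tendsto B (𝓝[Ioo a b] a) (𝓝 (B a)) :=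
      (hB a hmem).mono_left (nhdsWithin_mono _ Ioo_subset_Icc_self)
    exact tendsto_const_nhds.sub this
  exact le_of_tendsto_of_tendsto t1 t2 (eventually_mem_nhdsWithin.mono fun c hc => key c hc)

/-- An integral curve satisfies the integral equation. -/
private lemma curve_integral_eq {F : E → E} (hFc : Continuous F) {γ : ℝ → E} {t : ℝ}
    (hcont : ContinuousOn γ (Icc 0 t))
    (hder : ∀ s ∈ Ioo 0 t, HasDerivAt γ (F (γ s)) s) :
    ∀ s ∈ Icc 0 t, γ s = γ 0 + ∫ r in (0:ℝ)..s, F (γ r) := by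
  intro s hs
  have h1 : ContinuousOn γ (Icc 0 s) := hcont.mono (Icc_subset_Icc le_rfl hs.2)
  have h2 : ∀ r ∈ Ioo 0 s, HasDerivWithinAt γ (F (γ r)) (Ioi r) r := fun r hr =>
    (hder r ⟨hr.1, hr.2.trans_le hs.2⟩).hasDerivWithinAt
  have h3 : IntervalIntegrable (fun r => F (γ r)) volume 0 s := by
    apply ContinuousOn.intervalIntegrable
    rw [uIcc_of_le hs.1]
    exact hFc.comp_continuousOn h1
  have := integral_eq_sub_of_hasDeriv_right_of_le hs.1 h1 h2 h3
  rw [this]; abel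

/-- Continuous solution of the integral equation is differentiable in the interior. -/
private lemma deriv_of_integral_eq {F : E → E} (hFc : Continuous F) {γ : ℝ → E} {t : ℝ}
    (hcont : ContinuousOn γ (Icc 0 t))
    (heq : ∀ s ∈ Icc 0 t, γ s = γ 0 + ∫ r in (0:ℝ)..s, F (γ r)) :
    ∀ s ∈ Ioo 0 t, HasDerivAt γ (F (γ s)) s := by
  intro s hs
  have hIoo : Ioo (0:ℝ) t ∈ 𝓝 s := isOpen_Ioo.mem_nhds hs
  have hIcc : Icc (0:ℝ) t ∈ 𝓝 s := mem_of_superset hIoo Ioo_subset_Icc_self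
  have hFγc : ContinuousOn (fun r => F (γ r)) (Icc 0 t) := hFc.comp_continuousOn hcont
  have hint : IntervalIntegrable (fun r => F (γ r)) volume 0 s := by
    apply ContinuousOn.intervalIntegrable
    rw [uIcc_of_le hs.1.le]
    exact hFγc.mono (Icc_subset_Icc le_rfl hs.2.le)
  have hmeas : StronglyMeasurableAtFilter (fun r => F (γ r)) (𝓝 s) :=
    ⟨Ioo 0 t, hIoo, ((hFγc.mono Ioo_subset_Icc_self).aestronglyMeasurable measurableSet_Ioo)⟩
  have hca : ContinuousAt (fun r => F (γ r)) s :=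
    ((hFγc s (Ioo_subset_Icc_self hs)).continuousAt hIcc)
  have hd : HasDerivAt (fun u => γ 0 + ∫ r in (0:ℝ)..u, F (γ r)) (F (γ s)) s :=
    (integral_hasDerivAt_right hint hmeas hca).const_add _
  apply hd.congr_of_eventuallyEq
  filter_upwards [hIcc] with u hu
  exact heq u hu

set_option maxHeartbeats 2000000 in
private lemma approx_limit {F : E → E} {K : Set E} (hFc : Continuous F) (hK : IsCompact K)
    {x y : E} {t : ℝ} (htpos : 0 < t) {C M : ℝ} (hC0 : 0 ≤ C) (hM0 : 0 ≤ M)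
    (hCb : ∀ z ∈ K, ‖F z‖ ≤ C)
    (hmodul : ∀ ε > 0, ∃ δ > 0, ∀ z ∈ K, ∀ w ∈ K, dist z w < δ → dist (F z) (F w) < ε)
    {d : ℕ → ℕ → E}
    (hdx : ∀ n, d n 0 = x) (hdy : ∀ n, d n (2^n) = y)
    (hcons : ∀ n k, d (n+1) (2*k) = d n k)
    (hdK : ∀ n k, k ≤ 2^n → d n k ∈ K)
    (hb1 : ∀ n k, k < 2^n → ‖d n (k+1) - d n k‖ ≤ t/2^n * C)
    (hb2 : ∀ n k, k < 2^n → ‖d n (k+1) - d n k - (t/2^n) • F (d n k)‖ ≤ (t/2^n)^2/2 * M) :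
    ∃ γ : ℝ → E, ContinuousOn γ (Icc 0 t) ∧ γ 0 = x ∧ γ t = y ∧
      (∀ s ∈ Icc 0 t, γ s ∈ K) ∧
      (∀ s ∈ Icc 0 t, γ s = γ 0 + ∫ r in (0:ℝ)..s, F (γ r)) := by
  classical
  have h2pos : ∀ n : ℕ, (0:ℝ) < 2^n := fun n => by positivity
  -- consistency across levels
  have hlevel : ∀ j n k, d (n+j) (2^j * k) = d n k := by
    intro j
    induction j with
    | zero => intro n k; simp
    | succ j ih =>
      intro n k
      have h1 : n + (j+1) = (n+j) + 1 := by ring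
      have h2 : 2^(j+1) * k = 2*(2^j * k) := by ring
      rw [h1, h2, hcons, ih]
  obtain ⟨κ, hκdef⟩ : ∃ κ : ℕ → ℝ → ℕ, κ = fun n s => ⌊s * 2^n / t⌋₊ := ⟨_, rfl⟩
  obtain ⟨g, hgdef⟩ : ∃ g : ℕ → ℝ → E, g = fun n s => d n (κ n s) := ⟨_, rfl⟩
  have hκfl : ∀ n s, (0:ℝ) ≤ s → (κ n s : ℝ) ≤ s * 2^n / t ∧ s * 2^n / t < (κ n s : ℝ) + 1 := by
    intro n s hs
    rw [hκdef]
    exact ⟨Nat.floor_le (div_nonneg (mul_nonneg hs (h2pos n).le) htpos.le),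
      Nat.lt_floor_add_one _⟩
  have hκle : ∀ n, ∀ s ∈ Icc (0:ℝ) t, κ n s ≤ 2^n := by
    intro n s hs
    have h1 := (hκfl n s hs.1).1
    have h2 : s * 2^n / t ≤ 2^n := by
      rw [div_le_iff₀ htpos]
      nlinarith [h2pos n, hs.2]
    have : (κ n s : ℝ) ≤ ((2^n : ℕ) : ℝ) := by push_cast; linarith
    exact_mod_cast this
  have hκlb : ∀ n, ∀ s ∈ Icc (0:ℝ) t, (κ n s : ℝ) * (t/2^n) ≤ s := by
    intro n s hs
    have h1 := (hκfl n s hs.1).1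
    have key : s * 2^n / t * t = s * 2^n := div_mul_cancel₀ _ htpos.ne'
    rw [mul_div_assoc', div_le_iff₀ (h2pos n)]
    nlinarith [htpos]
  have hκub : ∀ n, ∀ s ∈ Icc (0:ℝ) t, s < ((κ n s : ℝ) + 1) * (t/2^n) := by
    intro n s hs
    have h1 := (hκfl n s hs.1).2
    rw [div_lt_iff₀ htpos] at h1
    rw [mul_div_assoc', lt_div_iff₀ (h2pos n)]
    nlinarith [htpos]
  -- chain estimate
  have hchain : ∀ n i j, i ≤ j → j ≤ 2^n → ‖d n j - d n i‖ ≤ ((j:ℝ) - i) * (t/2^n) * C := by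
    intro n i j hij hj
    induction j with
    | zero =>
      have : i = 0 := Nat.le_zero.1 hij
      subst this; simp
    | succ j ih =>
      rcases Nat.lt_or_ge i (j+1) with h | h
      · have hij' : i ≤ j := by omega
        have hj' : j ≤ 2^n := by omega
        have h1 := ih hij' hj'
        have h2 := hb1 n j (by omega)
        calc ‖d n (j+1) - d n i‖ ≤ ‖d n (j+1) - d n j‖ + ‖d n j - d n i‖ :=
              norm_sub_le_norm_sub_add_norm_sub _ _ _
        _ ≤ t/2^n * C + ((j:ℝ) - i) * (t/2^n) * C := by linarith
        _ = ((j:ℝ) + 1 - i) * (t/2^n) * C := by ring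
        _ = (((j+1:ℕ):ℝ) - i) * (t/2^n) * C := by push_cast; ring
      · have : i = j+1 := by omega
        subst this; simp
  -- Cauchy estimate between consecutive levels
  have hgdist : ∀ n, ∀ s ∈ Icc (0:ℝ) t, dist (g n s) (g (n+1) s) ≤ (C*t/2) * (1/2)^n := by
    intro n s hs
    have hfl := (hκfl n s hs.1).1
    have hfu := (hκfl n s hs.1).2
    have hjl : 2 * κ n s ≤ κ (n+1) s := by
      have h2 : s * 2^(n+1) / t = 2 * (s * 2^n / t) := by rw [pow_succ]; ring
      have hle : ((2 * κ n s : ℕ) : ℝ) ≤ s * 2^(n+1) / t := by push_cast; rw [h2]; linarith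
      simp only [hκdef] at hle ⊢
      exact Nat.le_floor hle
    have hju : κ (n+1) s < 2 * κ n s + 2 := by
      have h2 : s * 2^(n+1) / t = 2 * (s * 2^n / t) := by rw [pow_succ]; ring
      have hlt : s * 2^(n+1) / t < ((2 * κ n s + 2 : ℕ) : ℝ) := by push_cast; rw [h2]; linarith
      simp only [hκdef] at hlt ⊢
      exact Nat.floor_lt (div_nonneg (mul_nonneg hs.1 (h2pos (n+1)).le) htpos.le) |>.2 hlt
    have hgn : g n s = d (n+1) (2 * κ n s) := by rw [hgdef, hcons]
    rcases (by omega : κ (n+1) s = 2 * κ n s ∨ κ (n+1) s = 2 * κ n s + 1) with h | h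
    · rw [hgdef]
      simp only
      rw [h, ← hcons]
      simp
      positivity
    · have hjle : κ (n+1) s ≤ 2^(n+1) := hκle (n+1) s hs
      have h2k : 2 * κ n s < 2^(n+1) := by omega
      have hb := hb1 (n+1) (2 * κ n s) h2k
      rw [hgdef]
      simp only
      rw [h, ← hcons n (κ n s), dist_eq_norm']
      calc ‖d (n+1) (2 * κ n s + 1) - d (n+1) (2 * κ n s)‖ ≤ t/2^(n+1) * C := hb
      _ = C*t/2 * (1/2)^n := by rw [pow_succ]; field_simp; rw [one_div, inv_pow]; field_simp
  -- limit curve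
  have hcau : ∀ s ∈ Icc (0:ℝ) t, ∃ L, Tendsto (fun n => g n s) atTop (𝓝 L) := by
    intro s hs
    apply cauchySeq_tendsto_of_complete
    exact cauchySeq_of_le_geometric (1/2) (C*t/2) (by norm_num) (fun n => hgdist n s hs)
  choose! γ hγ using hcau
  -- values at dyadic points
  have hsdy : ∀ (n k : ℕ), k ≤ 2^n → (k:ℝ) * (t/2^n) ∈ Icc (0:ℝ) t := by
    intro n k hk
    constructor
    · positivity
    · have h1 : (k:ℝ) ≤ 2^n := by exact_mod_cast (by push_cast; exact_mod_cast hk : (k:ℝ) ≤ ((2^n : ℕ):ℝ))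
      calc (k:ℝ) * (t/2^n) ≤ 2^n * (t/2^n) := by
            apply mul_le_mul_of_nonneg_right h1 (by positivity)
      _ = t := by field_simp
  have hγd : ∀ (n k : ℕ), k ≤ 2^n → γ ((k:ℝ) * (t/2^n)) = d n k := by
    intro n k hk
    have hs₀m : (k:ℝ) * (t/2^n) ∈ Icc (0:ℝ) t := hsdy n k hk
    have hev : ∀ j, g (n+j) ((k:ℝ) * (t/2^n)) = d n k := by
      intro j
      have hκval : κ (n+j) ((k:ℝ) * (t/2^n)) = 2^j * k := by
        rw [hκdef]
        have heval : (k:ℝ) * (t/2^n) * 2^(n+j) / t = ((2^j * k : ℕ) : ℝ) := by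
          push_cast
          rw [pow_add]
          field_simp
        simp only [heval]
        exact Nat.floor_natCast _
      rw [hgdef]
      simp only
      rw [hκval, hlevel]
    have h1 : Tendsto (fun m => g m ((k:ℝ) * (t/2^n))) atTop (𝓝 (d n k)) := by
      apply tendsto_const_nhds.congr'
      filter_upwards [eventually_ge_atTop n] with m hm
      obtain ⟨j, rfl⟩ := Nat.exists_eq_add_of_le hm
      exact (hev j).symm
    exact tendsto_nhds_unique (hγ _ hs₀m) h1
  have hγ0 : γ 0 = x := by
    have := hγd 0 0 (by norm_num)
    simpa [hdx 0] using this
  have hγt : γ t = y := by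
    have hy : d 0 1 = y := by simpa using hdy 0
    have := hγd 0 1 (by norm_num)
    rw [hy] at this
    simpa using this
  have hγK : ∀ s ∈ Icc (0:ℝ) t, γ s ∈ K := by
    intro s hs
    apply hK.isClosed.mem_of_tendsto (hγ s hs)
    apply Eventually.of_forall
    intro n
    rw [hgdef]
    exact hdK n _ (hκle n s hs)
  -- distance to approximation
  have hγg : ∀ n, ∀ s ∈ Icc (0:ℝ) t, dist (g n s) (γ s) ≤ C*t*(1/2)^n := by
    intro n s hs
    have := dist_le_of_le_geometric_of_tendsto (1/2) (C*t/2) (by norm_num)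
      (fun m => hgdist m s hs) (hγ s hs) n
    calc dist (g n s) (γ s) ≤ C*t/2 * (1/2)^n / (1 - 1/2) := this
    _ = C*t*(1/2)^n := by ring
  -- Lipschitz property
  have hlipaux : ∀ s' s, s' ∈ Icc (0:ℝ) t → s ∈ Icc (0:ℝ) t → s' ≤ s →
      dist (γ s) (γ s') ≤ C * (s - s') := by
    intro s' s hs' hs hss
    have key : ∀ n : ℕ, dist (γ s) (γ s') ≤ C * (s - s') + 3*C*t*(1/2)^n := by
      intro n
      have hmono : κ n s' ≤ κ n s := by
        rw [hκdef]
        apply Nat.floor_le_floor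
        gcongr
      have hcd : dist (g n s) (g n s') ≤ C * (s - s') + C*t*(1/2)^n := by
        rw [hgdef]
        simp only
        rw [dist_eq_norm]
        have h1 := hchain n (κ n s') (κ n s) hmono (hκle n s hs)
        have h2 : ((κ n s : ℝ) - κ n s') * (t/2^n) ≤ (s - s') + t/2^n := by
          have l1 := hκlb n s hs
          have l2 := hκub n s' hs'
          nlinarith [h2pos n]
        have h3 : (t:ℝ)/2^n = t*(1/2)^n := by
          rw [one_div, inv_pow]; ring
        calc ‖d n (κ n s) - d n (κ n s')‖ ≤ ((κ n s : ℝ) - κ n s') * (t/2^n) * C := h1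
        _ ≤ ((s - s') + t/2^n) * C := by
              apply mul_le_mul_of_nonneg_right h2 hC0
        _ = C * (s - s') + C*t*(1/2)^n := by rw [h3]; ring
      calc dist (γ s) (γ s') ≤ dist (γ s) (g n s) + dist (g n s) (g n s') +
            dist (g n s') (γ s') := dist_triangle4 _ _ _ _
      _ ≤ C*t*(1/2)^n + (C * (s - s') + C*t*(1/2)^n) + C*t*(1/2)^n := by
            have a1 := hγg n s hs
            have a2 := hγg n s' hs'
            rw [dist_comm (γ s) (g n s)]
            linarith
      _ = C * (s - s') + 3*C*t*(1/2)^n := by ring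
    have hlim : Tendsto (fun n : ℕ => C * (s - s') + 3*C*t*(1/2)^n) atTop
        (𝓝 (C * (s - s') + 0)) := by
      apply tendsto_const_nhds.add
      have := tendsto_pow_atTop_nhds_zero_of_lt_one (by norm_num : (0:ℝ) ≤ 1/2)
        (by norm_num : (1:ℝ)/2 < 1)
      simpa using (this.const_mul (3*C*t))
    rw [add_zero] at hlim
    exact ge_of_tendsto hlim (Eventually.of_forall key)
  have hlip : ∀ s ∈ Icc (0:ℝ) t, ∀ s' ∈ Icc (0:ℝ) t, dist (γ s) (γ s') ≤ C * dist s s' := by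
    intro s hs s' hs'
    rcases le_total s' s with h | h
    · rw [Real.dist_eq, abs_of_nonneg (by linarith)]
      exact hlipaux s' s hs' hs h
    · rw [dist_comm (γ s) (γ s'), Real.dist_eq, abs_of_nonpos (by linarith), neg_sub]
      exact hlipaux s s' hs hs' h
  have hγc : ContinuousOn γ (Icc 0 t) := by
    have hl : LipschitzOnWith C.toNNReal γ (Icc 0 t) := by
      rw [lipschitzOnWith_iff_dist_le_mul]
      intro u hu v hv
      calc dist (γ u) (γ v) ≤ C * dist u v := hlip u hu v hv
      _ = C.toNNReal * dist u v := by rw [Real.coe_toNNReal C hC0]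
    exact hl.continuousOn
  -- integrability helper
  have hFγc : ContinuousOn (fun r => F (γ r)) (Icc 0 t) := hFc.comp_continuousOn hγc
  have hint : ∀ a b : ℝ, 0 ≤ a → a ≤ b → b ≤ t →
      IntervalIntegrable (fun r => F (γ r)) volume a b := by
    intro a b ha hab hb
    apply ContinuousOn.intervalIntegrable
    rw [uIcc_of_le hab]
    exact hFγc.mono (Icc_subset_Icc ha hb)
  -- discrete integral estimate
  have G1 : ∀ (n : ℕ) (ε δ : ℝ), 0 < ε → 0 < δ →
      (∀ z ∈ K, ∀ w ∈ K, dist z w < δ → dist (F z) (F w) < ε) → C * (t/2^n) < δ →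
      ∀ (k : ℕ), k ≤ 2^n → ‖γ ((k:ℝ)*(t/2^n)) - x - ∫ r in (0:ℝ)..((k:ℝ)*(t/2^n)), F (γ r)‖
        ≤ k * ((t/2^n)^2/2*M + (t/2^n)*ε) := by
    intro n ε δ hε hδ hmod hsmall k
    induction k with
    | zero => intro _; simp [hγ0]
    | succ k ih =>
      intro hk1
      have hk : k ≤ 2^n := by omega
      have hklt : k < 2^n := by omega
      have ihk := ih hk
      have hh0 : (0:ℝ) < t/2^n := by positivity
      have hAmem : (k:ℝ)*(t/2^n) ∈ Icc (0:ℝ) t := hsdy n k hk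
      have hBmem' : ((k+1:ℕ):ℝ)*(t/2^n) ∈ Icc (0:ℝ) t := hsdy n (k+1) hk1
      have hcast : ((k+1:ℕ):ℝ) = (k:ℝ)+1 := by push_cast; ring
      have hBmem : ((k:ℝ)+1)*(t/2^n) ∈ Icc (0:ℝ) t := by rwa [hcast] at hBmem'
      have hAB : (k:ℝ)*(t/2^n) ≤ ((k:ℝ)+1)*(t/2^n) := by nlinarith
      have hA : γ ((k:ℝ)*(t/2^n)) = d n k := hγd n k hk
      have hB : γ (((k:ℝ)+1)*(t/2^n)) = d n (k+1) := by
        rw [← hcast]; exact hγd n (k+1) hk1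
      have hi1 : IntervalIntegrable (fun r => F (γ r)) volume 0 ((k:ℝ)*(t/2^n)) :=
        hint _ _ le_rfl hAmem.1 hAmem.2
      have hi2 : IntervalIntegrable (fun r => F (γ r)) volume
          ((k:ℝ)*(t/2^n)) (((k:ℝ)+1)*(t/2^n)) :=
        hint _ _ hAmem.1 hAB hBmem.2
      have hadd := integral_add_adjacent_intervals hi1 hi2
      -- the three pieces
      have key : γ (((k:ℝ)+1)*(t/2^n)) - x - ∫ r in (0:ℝ)..(((k:ℝ)+1)*(t/2^n)), F (γ r)
          = (γ ((k:ℝ)*(t/2^n)) - x - ∫ r in (0:ℝ)..((k:ℝ)*(t/2^n)), F (γ r))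
          + ((γ (((k:ℝ)+1)*(t/2^n)) - γ ((k:ℝ)*(t/2^n)))
              - (t/2^n) • F (γ ((k:ℝ)*(t/2^n))))
          + ((t/2^n) • F (γ ((k:ℝ)*(t/2^n)))
              - ∫ r in ((k:ℝ)*(t/2^n))..(((k:ℝ)+1)*(t/2^n)), F (γ r)) := by
        rw [← hadd]; abel
      have bnd2 : ‖(γ (((k:ℝ)+1)*(t/2^n)) - γ ((k:ℝ)*(t/2^n)))
          - (t/2^n) • F (γ ((k:ℝ)*(t/2^n)))‖ ≤ (t/2^n)^2/2*M := by
        rw [hA, hB]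
        exact hb2 n k hklt
      have bnd3 : ‖(t/2^n) • F (γ ((k:ℝ)*(t/2^n)))
          - ∫ r in ((k:ℝ)*(t/2^n))..(((k:ℝ)+1)*(t/2^n)), F (γ r)‖ ≤ ε * (t/2^n) := by
        have hconst : (t/2^n) • F (γ ((k:ℝ)*(t/2^n)))
            = ∫ _ in ((k:ℝ)*(t/2^n))..(((k:ℝ)+1)*(t/2^n)), F (γ ((k:ℝ)*(t/2^n))) := by
          rw [intervalIntegral.integral_const]
          congr 1
          ring
        rw [hconst, ← intervalIntegral.integral_sub (intervalIntegrable_const) hi2]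
        have hb' := intervalIntegral.norm_integral_le_of_norm_le_const
          (C := ε) (f := fun r => F (γ ((k:ℝ)*(t/2^n))) - F (γ r))
          (a := (k:ℝ)*(t/2^n)) (b := ((k:ℝ)+1)*(t/2^n)) ?_
        · calc _ ≤ ε * |(((k:ℝ)+1)*(t/2^n)) - ((k:ℝ)*(t/2^n))| := hb'
          _ = ε * (t/2^n) := by
                rw [show (((k:ℝ)+1)*(t/2^n)) - ((k:ℝ)*(t/2^n)) = t/2^n by ring,
                  abs_of_pos hh0]
        · intro r hr
          rw [uIoc_of_le hAB] at hr
          have hrmem : r ∈ Icc (0:ℝ) t := ⟨hAmem.1.trans hr.1.le, hr.2.trans hBmem.2⟩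
          have hdist : dist (γ ((k:ℝ)*(t/2^n))) (γ r) < δ := by
            have := hlip _ hAmem r hrmem
            have hdr : dist ((k:ℝ)*(t/2^n)) r ≤ t/2^n := by
              rw [Real.dist_eq, abs_of_nonpos (by linarith [hr.1.le])]
              linarith [hr.2]
            have : dist (γ ((k:ℝ)*(t/2^n))) (γ r) ≤ C * (t/2^n) :=
              this.trans (mul_le_mul_of_nonneg_left hdr hC0)
            linarith
          have := hmod _ (hγK _ hAmem) _ (hγK r hrmem) hdist
          rw [dist_eq_norm] at this
          exact this.le
      rw [hcast, key]
      refine le_trans norm_add₃_le ?_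
      have hend : (k:ℝ) * ((t/2^n)^2/2*M + (t/2^n)*ε) + (t/2^n)^2/2*M + ε*(t/2^n)
          = ((k:ℝ)+1) * ((t/2^n)^2/2*M + (t/2^n)*ε) := by ring
      linarith [ihk, bnd2, bnd3]
  -- estimate at arbitrary points
  have G2 : ∀ (n : ℕ) (ε δ : ℝ), 0 < ε → 0 < δ →
      (∀ z ∈ K, ∀ w ∈ K, dist z w < δ → dist (F z) (F w) < ε) → C * (t/2^n) < δ →
      ∀ s ∈ Icc (0:ℝ) t, ‖γ s - x - ∫ r in (0:ℝ)..s, F (γ r)‖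
        ≤ t*(t/2^n)*M/2 + t*ε + 2*C*(t/2^n) := by
    intro n ε δ hε hδ hmod hsmall s hs
    have hkle := hκle n s hs
    have hA1 : (κ n s : ℝ) * (t/2^n) ≤ s := hκlb n s hs
    have hA2 : s < ((κ n s : ℝ) + 1) * (t/2^n) := hκub n s hs
    have hAmem : (κ n s : ℝ)*(t/2^n) ∈ Icc (0:ℝ) t := hsdy n (κ n s) hkle
    have herr := G1 n ε δ hε hδ hmod hsmall (κ n s) hkle
    have hi1 : IntervalIntegrable (fun r => F (γ r)) volume 0 ((κ n s : ℝ)*(t/2^n)) :=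
      hint _ _ le_rfl hAmem.1 hAmem.2
    have hi2 : IntervalIntegrable (fun r => F (γ r)) volume ((κ n s : ℝ)*(t/2^n)) s :=
      hint _ _ hAmem.1 hA1 hs.2
    have hadd := integral_add_adjacent_intervals hi1 hi2
    have key : γ s - x - ∫ r in (0:ℝ)..s, F (γ r)
        = (γ ((κ n s : ℝ)*(t/2^n)) - x - ∫ r in (0:ℝ)..((κ n s : ℝ)*(t/2^n)), F (γ r))
        + (γ s - γ ((κ n s : ℝ)*(t/2^n)))
        + (- ∫ r in ((κ n s : ℝ)*(t/2^n))..s, F (γ r)) := by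
      rw [← hadd]; abel
    have bnd2 : ‖γ s - γ ((κ n s : ℝ)*(t/2^n))‖ ≤ C*(t/2^n) := by
      rw [← dist_eq_norm]
      have := hlip s hs _ hAmem
      have hdr : dist s ((κ n s : ℝ)*(t/2^n)) ≤ t/2^n := by
        rw [Real.dist_eq, abs_of_nonneg (by linarith)]
        linarith
      exact this.trans (mul_le_mul_of_nonneg_left hdr hC0)
    have bnd3 : ‖∫ r in ((κ n s : ℝ)*(t/2^n))..s, F (γ r)‖ ≤ C*(t/2^n) := by
      have hb' := intervalIntegral.norm_integral_le_of_norm_le_const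
        (C := C) (f := fun r => F (γ r)) (a := (κ n s : ℝ)*(t/2^n)) (b := s) ?_
      · calc _ ≤ C * |s - (κ n s : ℝ)*(t/2^n)| := hb'
        _ ≤ C*(t/2^n) := by
              apply mul_le_mul_of_nonneg_left _ hC0
              rw [abs_of_nonneg (by linarith)]
              linarith
      · intro r hr
        rw [uIoc_of_le hA1] at hr
        exact hCb _ (hγK r ⟨hAmem.1.trans hr.1.le, hr.2.trans hs.2⟩)
    have hbig : (κ n s : ℝ) * ((t/2^n)^2/2*M + (t/2^n)*ε) ≤ t*(t/2^n)*M/2 + t*ε := by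
      have hkr : (κ n s : ℝ) ≤ 2^n := by
        calc (κ n s : ℝ) ≤ ((2^n : ℕ):ℝ) := by exact_mod_cast hkle
        _ = 2^n := by push_cast; ring
      have hD0 : (0:ℝ) ≤ (t/2^n)^2/2*M + (t/2^n)*ε := by positivity
      have h2n : (2:ℝ)^n * (t/2^n) = t := by field_simp
      calc (κ n s : ℝ) * ((t/2^n)^2/2*M + (t/2^n)*ε)
          ≤ (2:ℝ)^n * ((t/2^n)^2/2*M + (t/2^n)*ε) := mul_le_mul_of_nonneg_right hkr hD0
      _ = t*(t/2^n)*M/2 + t*ε := by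
            rw [show (2:ℝ)^n * ((t/2^n)^2/2*M + (t/2^n)*ε)
              = ((2:ℝ)^n * (t/2^n)) * ((t/2^n)/2*M + ε) by ring, h2n]
            ring
    rw [key]
    refine le_trans norm_add₃_le ?_
    rw [norm_neg]
    linarith [herr.trans hbig, bnd2, bnd3]
  -- conclusion: the integral equation holds
  have heq : ∀ s ∈ Icc (0:ℝ) t, γ s = γ 0 + ∫ r in (0:ℝ)..s, F (γ r) := by
    intro s hs
    rw [hγ0]
    have hzero : ‖γ s - x - ∫ r in (0:ℝ)..s, F (γ r)‖ ≤ 0 := by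
      apply le_of_forall_pos_le_add
      intro ε' hε'
      rw [zero_add]
      set ε := ε'/(3*t) with hεdef
      have hε : 0 < ε := by positivity
      obtain ⟨δ, hδ, hmod⟩ := hmodul ε hε
      have htend : Tendsto (fun n : ℕ => t/2^n) atTop (𝓝 0) := by
        have h0 := tendsto_pow_atTop_nhds_zero_of_lt_one
          (by norm_num : (0:ℝ) ≤ 1/2) (by norm_num : (1:ℝ)/2 < 1)
        have := h0.const_mul t
        rw [mul_zero] at this
        apply this.congr
        intro n
        rw [one_div, inv_pow]
        ring
      have e1 : ∀ᶠ n : ℕ in atTop, C * (t/2^n) < δ := by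
        have : Tendsto (fun n : ℕ => C * (t/2^n)) atTop (𝓝 (C * 0)) := htend.const_mul C
        rw [mul_zero] at this
        exact this.eventually_lt_const hδ
      have e2 : ∀ᶠ n : ℕ in atTop, t*(t/2^n)*M/2 < ε'/3 := by
        have : Tendsto (fun n : ℕ => t*(t/2^n)*M/2) atTop (𝓝 0) := by
          have h1 := (htend.const_mul t).mul_const M
          have h2 := h1.div_const 2
          simpa using h2.congr (fun n => by ring)
        exact this.eventually_lt_const (by positivity)
      have e3 : ∀ᶠ n : ℕ in atTop, 2*C*(t/2^n) < ε'/3 := by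
        have : Tendsto (fun n : ℕ => 2*C*(t/2^n)) atTop (𝓝 0) := by
          have h1 := htend.const_mul (2*C)
          simpa using h1
        exact this.eventually_lt_const (by positivity)
      obtain ⟨n, h1, h2, h3⟩ := (e1.and (e2.and e3)).exists
      have hb := G2 n ε δ hε hδ hmod h1 s hs
      have htε : t * ε = ε'/3 := by
        rw [hεdef]
        field_simp
      linarith
    have : γ s - x - ∫ r in (0:ℝ)..s, F (γ r) = 0 :=
      norm_le_zero_iff.1 hzero
    have h2 : γ s - (x + ∫ r in (0:ℝ)..s, F (γ r)) = 0 := by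
      rw [← this]; abel
    exact sub_eq_zero.1 h2
  exact ⟨γ, hγc, hγ0, hγt, hγK, heq⟩

end Aux

variable {N : ℕ}

private lemma supNorm_le {G : EuclideanSpace ℝ (Fin N) → EuclideanSpace ℝ (Fin N)}
    {K : Set (EuclideanSpace ℝ (Fin N))} {c : ℝ} (hC : ∀ z ∈ K, ‖G z‖ ≤ c) :
    supNorm G K ≤ ENNReal.ofReal c :=
  iSup₂_le fun z hz => by
    rw [← enorm_eq_nnnorm, ← ofReal_norm]; exact ENNReal.ofReal_le_ofReal (hC z hz)

private lemma le_supNorm {G : EuclideanSpace ℝ (Fin N) → EuclideanSpace ℝ (Fin N)}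
    {K : Set (EuclideanSpace ℝ (Fin N))} (hS : supNorm G K ≠ ⊤) {z} (hz : z ∈ K) :
    ‖G z‖ ≤ (supNorm G K).toReal := by
  have h : (‖G z‖₊ : ENNReal) ≤ supNorm G K := le_iSup₂ (f := fun z _ => (‖G z‖₊ : ENNReal)) z hz
  have := ENNReal.toReal_mono hS h
  simpa using this

private lemma nnnorm_le_ofReal_mul {v : EuclideanSpace ℝ (Fin N)} {τ : ℝ} (hτ : 0 ≤ τ)
    {S : ENNReal} (hS : S ≠ ⊤) (h : ‖v‖ ≤ τ * S.toReal) :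
    (‖v‖₊ : ENNReal) ≤ ENNReal.ofReal τ * S := by
  rw [← ENNReal.ofReal_toReal hS, ← ENNReal.ofReal_mul hτ, ← enorm_eq_nnnorm, ← ofReal_norm]
  exact ENNReal.ofReal_le_ofReal h

private lemma norm_le_of_nnnorm_le {v : EuclideanSpace ℝ (Fin N)} {τ c : ℝ} (hτ : 0 ≤ τ)
    (hc : 0 ≤ c) {S : ENNReal} (hS : S ≤ ENNReal.ofReal c)
    (h : (‖v‖₊ : ENNReal) ≤ ENNReal.ofReal τ * S) : ‖v‖ ≤ τ * c := by
  have h2 : ENNReal.ofReal ‖v‖ ≤ ENNReal.ofReal (τ * c) := by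
    rw [ofReal_norm, enorm_eq_nnnorm, ENNReal.ofReal_mul hτ]
    exact h.trans (mul_le_mul' le_rfl hS)
  exact (ENNReal.ofReal_le_ofReal_iff (by positivity)).1 h2

/-- An integral curve staying in `K` satisfies the `G_K` Taylor bounds. -/
private lemma curve_mem_GK {F : EuclideanSpace ℝ (Fin N) → EuclideanSpace ℝ (Fin N)}
    (hF : ContDiff ℝ 1 F) {K : Set (EuclideanSpace ℝ (Fin N))} {t : ℝ}
    {γ : ℝ → EuclideanSpace ℝ (Fin N)} (ht : 0 ≤ t) (hγ : IsIntCurve F t γ)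
    (hmem : ∀ s ∈ Icc 0 t, γ s ∈ K) : (γ 0, γ t, t) ∈ GK F K := by
  rcases eq_or_lt_of_le ht with rfl | htpos
  · refine ⟨le_rfl, ?_, ?_⟩ <;> simp
  obtain ⟨hcont, hder⟩ := hγ
  refine ⟨ht, ?_, ?_⟩
  · -- first order bound
    by_cases hS : supNorm F K = ⊤
    · rw [hS, ENNReal.mul_top (ENNReal.ofReal_pos.2 htpos).ne']
      exact le_top
    apply nnnorm_le_ofReal_mul ht hS
    set C := (supNorm F K).toReal with hC
    have hCb : ∀ z ∈ K, ‖F z‖ ≤ C := fun z hz => le_supNorm hS hz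
    have := mv_ioo (B := fun s => C * s) (B' := fun _ => C) ht hcont hder
      (by fun_prop) (fun s _ => by simpa using (hasDerivAt_id s).const_mul C)
      (fun s hs => hCb _ (hmem s (Ioo_subset_Icc_self hs)))
    calc ‖γ t - γ 0‖ ≤ C * t - C * 0 := this
    _ = t * C := by ring
  · -- second order bound
    set G := fun z => fderiv ℝ F z (F z) with hG
    by_cases hS : supNorm G K = ⊤
    · rw [hS, ENNReal.mul_top (ENNReal.ofReal_pos.2 (by positivity : (0:ℝ) < t^2/2)).ne']
      exact le_top
    apply nnnorm_le_ofReal_mul (by positivity) hS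
    set M := (supNorm G K).toReal with hM
    have hMb : ∀ z ∈ K, ‖G z‖ ≤ M := fun z hz => le_supNorm hS hz
    have hM0 : 0 ≤ M := (norm_nonneg _).trans (hMb _ (hmem 0 (left_mem_Icc.2 ht)))
    -- derivative of F ∘ γ
    have hFγ : ∀ s ∈ Ioo 0 t, HasDerivAt (fun r => F (γ r)) (G (γ s)) s := by
      intro s hs
      exact ((hF.differentiable one_ne_zero (γ s)).hasFDerivAt).comp_hasDerivAt s (hder s hs)
    -- bound ‖F (γ s) - F (γ 0)‖ ≤ M * s on Ioo
    have inner : ∀ s ∈ Ioo 0 t, ‖F (γ s) - F (γ 0)‖ ≤ M * s := by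
      intro s hs
      have := mv_ioo (f := fun r => F (γ r)) (φ := fun r => G (γ r))
        (B := fun r => M * r) (B' := fun _ => M) hs.1.le
        ((hF.continuous.comp_continuousOn hcont).mono (Icc_subset_Icc le_rfl hs.2.le))
        (fun r hr => hFγ r ⟨hr.1, hr.2.trans hs.2⟩)
        (by fun_prop) (fun r _ => by simpa using (hasDerivAt_id r).const_mul M)
        (fun r hr => hMb _ (hmem r (Ioo_subset_Icc_self ⟨hr.1, hr.2.trans hs.2⟩)))
      simpa using this
    have := mv_ioo (f := fun s => γ s - γ 0 - s • F (γ 0))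
      (φ := fun s => F (γ s) - F (γ 0))
      (B := fun s => M * s ^ 2 / 2) (B' := fun s => M * s) ht
      ((hcont.sub continuousOn_const).sub (by fun_prop))
      (fun s hs => ((hder s hs).sub_const _).sub
        (by simpa using (hasDerivAt_id s).smul_const (F (γ 0))))
      (by fun_prop)
      (fun s _ => by
        have h := ((hasDerivAt_pow 2 s).const_mul M).div_const 2
        exact h.congr_deriv (by simp only [Nat.cast_ofNat, show (2:ℕ) - 1 = 1 from rfl, pow_one]; ring))
      (fun s hs => inner s hs)
    refine le_trans ?_ (le_of_eq (by ring : M * t ^ 2 / 2 = t ^ 2 / 2 * M))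
    simpa using this

/-- `R_K ⊆ Γ_K(R_K)`. -/
private lemma rk_sub_gamma {F : EuclideanSpace ℝ (Fin N) → EuclideanSpace ℝ (Fin N)}
    (hF : ContDiff ℝ 1 F) (K : Set (EuclideanSpace ℝ (Fin N))) :
    RK F K ⊆ GammaK F K (RK F K) := by
  rintro ⟨x, y, t⟩ ⟨ht, γ, ⟨hcont, hder⟩, h0, hT, hK⟩
  dsimp only at ht hK ⊢
  have ht2 : (0:ℝ) ≤ t / 2 := by linarith
  have h2t : t / 2 ≤ t := by linarith
  refine ⟨?_, ?_, ?_, γ (t/2), ?_, ?_⟩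
  · have := curve_mem_GK hF ht ⟨hcont, hder⟩ hK
    rwa [h0, hT] at this
  · exact h0 ▸ hK 0 ⟨le_rfl, ht⟩
  · exact hT ▸ hK t ⟨ht, le_rfl⟩
  · -- first half
    refine ⟨ht2, γ, ⟨hcont.mono (Icc_subset_Icc le_rfl h2t), ?_⟩, h0, rfl, ?_⟩
    · exact fun s hs => hder s ⟨hs.1, hs.2.trans_le h2t⟩
    · exact fun s hs => hK s ⟨hs.1, hs.2.trans h2t⟩
  · -- second half
    refine ⟨ht2, fun s => γ (s + t/2), ⟨?_, ?_⟩, ?_, ?_, ?_⟩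
    · refine hcont.comp (by fun_prop) fun s hs => ?_
      exact ⟨by linarith [hs.1], by linarith [hs.2]⟩
    · intro s hs
      exact (hder (s + t/2) ⟨by linarith [hs.1], by linarith [hs.2]⟩).comp_add_const s (t/2)
    · norm_num
    · show γ (t/2 + t/2) = y
      rw [show t/2 + t/2 = t by ring, hT]
    · exact fun s hs => hK (s + t/2) ⟨by linarith [hs.1], by linarith [hs.2]⟩

/-- `Γ_K(R_K) ⊆ R_K`. -/
private lemma gamma_sub_rk {F : EuclideanSpace ℝ (Fin N) → EuclideanSpace ℝ (Fin N)}
    (hF : ContDiff ℝ 1 F) (K : Set (EuclideanSpace ℝ (Fin N))) :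
    GammaK F K (RK F K) ⊆ RK F K := by
  rintro ⟨x, y, t⟩ ⟨hGK, hx, hy, u, ⟨ht2, γ₁, hγ₁, h10, h1t, h1K⟩,
    ⟨_, γ₂, hγ₂, h20, h2t, h2K⟩⟩
  dsimp only at *
  have ht : (0:ℝ) ≤ t := hGK.1
  rcases eq_or_lt_of_le ht with rfl | htpos
  · -- t = 0
    rw [show (0:ℝ)/2 = 0 by norm_num] at hγ₁ h1K h1t h2t
    refine ⟨le_rfl, γ₁, hγ₁, h10, ?_, h1K⟩
    show γ₁ 0 = y
    rw [h10, ← h2t, h20, ← h1t, h10]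
  · -- t > 0 : concatenate
    set δ : ℝ → EuclideanSpace ℝ (Fin N) :=
      fun s => γ₁ (min s (t/2)) + (γ₂ (max s (t/2) - t/2) - u) with hδ
    have hmem1 : ∀ s ∈ Icc (0:ℝ) t, min s (t/2) ∈ Icc (0:ℝ) (t/2) :=
      fun s hs => ⟨le_min hs.1 (by linarith), min_le_right _ _⟩
    have hmem2 : ∀ s ∈ Icc (0:ℝ) t, max s (t/2) - t/2 ∈ Icc (0:ℝ) (t/2) :=
      fun s hs => ⟨by simp, by simp [hs.2]; linarith [hs.2]⟩
    have heq1 : ∀ s ≤ t/2, δ s = γ₁ s := by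
      intro s hs
      simp only [hδ, min_eq_left hs, max_eq_right hs, sub_self, h20, sub_self, add_zero]
    have heq2 : ∀ s, t/2 ≤ s → δ s = γ₂ (s - t/2) := by
      intro s hs
      simp only [hδ, min_eq_right hs, max_eq_left hs, h1t]
      abel
    have hδc : ContinuousOn δ (Icc 0 t) := by
      apply ContinuousOn.add
      · exact hγ₁.1.comp (by fun_prop) hmem1
      · exact (hγ₂.1.comp (by fun_prop) hmem2).sub continuousOn_const
    have hδ0 : δ 0 = x := by rw [heq1 0 (by linarith), h10]
    have hδt : δ t = y := by rw [heq2 t (by linarith), show t - t/2 = t/2 by ring, h2t]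
    have hδK : ∀ s ∈ Icc (0:ℝ) t, δ s ∈ K := by
      intro s hs
      rcases le_total s (t/2) with h | h
      · rw [heq1 s h]; exact h1K s ⟨hs.1, h⟩
      · rw [heq2 s h]; exact h2K _ ⟨by linarith, by linarith [hs.2]⟩
    -- integral equation for δ
    have hci1 := curve_integral_eq hF.continuous hγ₁.1 hγ₁.2
    have hci2 := curve_integral_eq hF.continuous hγ₂.1 hγ₂.2
    have hδint : ∀ a b, a ∈ Icc (0:ℝ) t → b ∈ Icc (0:ℝ) t → a ≤ b →
        IntervalIntegrable (fun r => F (δ r)) volume a b := by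
      intro a b ha hb hab
      apply ContinuousOn.intervalIntegrable
      rw [uIcc_of_le hab]
      exact (hF.continuous.comp_continuousOn hδc).mono (Icc_subset_Icc ha.1 hb.2)
    have heqhalf : ∀ s ∈ Icc (0:ℝ) (t/2), δ s = δ 0 + ∫ r in (0:ℝ)..s, F (δ r) := by
      intro s hs
      have : (∫ r in (0:ℝ)..s, F (δ r)) = ∫ r in (0:ℝ)..s, F (γ₁ r) := by
        apply intervalIntegral.integral_congr
        intro r hr
        rw [uIcc_of_le hs.1] at hr
        show F (δ r) = F (γ₁ r)
        rw [heq1 r (hr.2.trans hs.2)]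
      rw [this, hδ0, heq1 s hs.2, ← h10]
      exact hci1 s hs
    have heqδ : ∀ s ∈ Icc (0:ℝ) t, δ s = δ 0 + ∫ r in (0:ℝ)..s, F (δ r) := by
      intro s hs
      rcases le_total s (t/2) with h | h
      · exact heqhalf s ⟨hs.1, h⟩
      · have key2 : δ s = u + ∫ r in (t/2)..s, F (δ r) := by
          have h1 : (∫ r in (t/2)..s, F (δ r)) = ∫ r in (t/2)..s, F (γ₂ (r - t/2)) := by
            apply intervalIntegral.integral_congr
            intro r hr
            rw [uIcc_of_le h] at hr
            show F (δ r) = F (γ₂ (r - t/2))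
            rw [heq2 r hr.1]
          have h2 : (∫ r in (t/2)..s, F (γ₂ (r - t/2)))
              = ∫ r in (t/2 - t/2)..(s - t/2), F (γ₂ r) :=
            intervalIntegral.integral_comp_sub_right (fun r => F (γ₂ r)) (t/2)
          rw [heq2 s h, h1, h2, show t/2 - t/2 = (0:ℝ) by ring, ← h20]
          exact hci2 (s - t/2) ⟨by linarith, by linarith [hs.2]⟩
        have hu : u = δ 0 + ∫ r in (0:ℝ)..(t/2), F (δ r) := by
          have := heqhalf (t/2) ⟨by linarith, le_rfl⟩
          rw [heq1 (t/2) le_rfl, h1t] at this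
          exact this
        rw [key2, hu, add_assoc,
          intervalIntegral.integral_add_adjacent_intervals
            (hδint 0 (t/2) ⟨le_rfl, ht⟩ ⟨by linarith, by linarith⟩ (by linarith))
            (hδint (t/2) s ⟨by linarith, by linarith⟩ hs h)]
    exact ⟨ht, δ, ⟨hδc, deriv_of_integral_eq hF.continuous hδc heqδ⟩, hδ0, hδt, hδK⟩

/-- Coinduction: any post-fixpoint of `Γ_K` is contained in `R_K`. -/
private lemma coind {F : EuclideanSpace ℝ (Fin N) → EuclideanSpace ℝ (Fin N)}
    (hF : ContDiff ℝ 1 F) {K : Set (EuclideanSpace ℝ (Fin N))} (hK : IsCompact K)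
    {Z : Set (EuclideanSpace ℝ (Fin N) × EuclideanSpace ℝ (Fin N) × ℝ)}
    (hZ : Z ⊆ GammaK F K Z) : Z ⊆ RK F K := by
  classical
  -- constants
  obtain ⟨C₀, hC₀⟩ := hK.exists_bound_of_continuousOn hF.continuous.continuousOn
  set C := max C₀ 0 with hCdef
  have hC0 : (0:ℝ) ≤ C := le_max_right _ _
  have hCb : ∀ z ∈ K, ‖F z‖ ≤ C := fun z hz => (hC₀ z hz).trans (le_max_left _ _)
  have hGc : Continuous (fun z => fderiv ℝ F z (F z)) :=
    (hF.continuous_fderiv one_ne_zero).clm_apply hF.continuous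
  obtain ⟨M₀, hM₀⟩ := hK.exists_bound_of_continuousOn hGc.continuousOn
  set M := max M₀ 0 with hMdef
  have hM0 : (0:ℝ) ≤ M := le_max_right _ _
  have hMb : ∀ z ∈ K, ‖fderiv ℝ F z (F z)‖ ≤ M := fun z hz =>
    (hM₀ z hz).trans (le_max_left _ _)
  have hS1 : supNorm F K ≤ ENNReal.ofReal C := supNorm_le hCb
  have hS2 : supNorm (fun z => fderiv ℝ F z (F z)) K ≤ ENNReal.ofReal M := supNorm_le hMb
  have hmodul : ∀ ε > 0, ∃ δ > 0, ∀ z ∈ K, ∀ w ∈ K, dist z w < δ → dist (F z) (F w) < ε := by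
    have hu := hK.uniformContinuousOn_of_continuous hF.continuous.continuousOn
    rw [Metric.uniformContinuousOn_iff] at hu
    intro ε hε
    obtain ⟨δ, hδ, h⟩ := hu ε hε
    exact ⟨δ, hδ, fun z hz w hw hd => h z hz w hw hd⟩
  -- step extraction
  have hstepZ : ∀ (a b : EuclideanSpace ℝ (Fin N)) (τ : ℝ), (a, b, τ) ∈ Z →
      a ∈ K ∧ b ∈ K ∧ 0 ≤ τ ∧ ‖b - a‖ ≤ τ * C ∧ ‖b - a - τ • F a‖ ≤ τ^2/2 * M ∧
      ∃ u, (a, u, τ/2) ∈ Z ∧ (u, b, τ/2) ∈ Z := by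
    intro a b τ h
    obtain ⟨⟨hτ, h1, h2⟩, haK, hbK, hu⟩ := hZ h
    dsimp only at hτ h1 h2 haK hbK hu
    refine ⟨haK, hbK, hτ, ?_, ?_, hu⟩
    · exact norm_le_of_nnnorm_le hτ hC0 hS1 h1
    · have := norm_le_of_nnnorm_le (by positivity : (0:ℝ) ≤ τ^2/2) hM0 hS2 h2
      exact this
  rintro ⟨x, y, t⟩ hxyz
  obtain ⟨hxK, hyK, ht, hbnd1, _, _⟩ := hstepZ x y t hxyz
  rcases eq_or_lt_of_le ht with rfl | htpos
  · -- t = 0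
    have hyx : y = x := by
      have : ‖y - x‖ ≤ 0 * C := hbnd1
      rw [zero_mul] at this
      have := le_antisymm this (norm_nonneg _)
      rwa [norm_sub_eq_zero_iff] at this
    refine ⟨le_rfl, fun _ => x, ⟨continuousOn_const, ?_⟩, rfl, hyx.symm, fun s _ => hxK⟩
    intro s hs
    simp at hs
  · -- t > 0 : build the dyadic skeleton
    have hZQ : ∀ (a b : EuclideanSpace ℝ (Fin N)) (τ : ℝ), (a,b,τ) ∈ Z →
        ∃ u, (a,u,τ/2) ∈ Z ∧ (u,b,τ/2) ∈ Z := fun a b τ h => (hstepZ a b τ h).2.2.2.2.2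
    obtain ⟨d, hgood, hcons⟩ :
        ∃ d : ℕ → ℕ → EuclideanSpace ℝ (Fin N), (∀ n, d n 0 = x ∧ d n (2^n) = y ∧
          ∀ k < 2^n, (d n k, d n (k+1), t/2^n) ∈ Z) ∧
        ∀ n k, d (n+1) (2*k) = d n k := by
      set Good : ℕ → (ℕ → EuclideanSpace ℝ (Fin N)) → Prop :=
        fun n f => f 0 = x ∧ f (2^n) = y ∧ ∀ k < 2^n, (f k, f (k+1), t/2^n) ∈ Z with hGood
      have step : ∀ n f, Good n f → ∃ g : ℕ → EuclideanSpace ℝ (Fin N),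
          Good (n+1) g ∧ ∀ k, g (2*k) = f k := by
        intro n f hf
        have harith : t/2^n/2 = t/2^(n+1) := by rw [pow_succ]; ring
        have hex : ∀ k, ∃ u, k < 2^n →
            (f k, u, t/2^(n+1)) ∈ Z ∧ (u, f (k+1), t/2^(n+1)) ∈ Z := by
          intro k
          by_cases hk : k < 2^n
          · obtain ⟨u, hu1, hu2⟩ := hZQ _ _ _ (hf.2.2 k hk)
            exact ⟨u, fun _ => ⟨harith ▸ hu1, harith ▸ hu2⟩⟩
          · exact ⟨x, fun h => absurd h hk⟩
        choose u hu using hex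
        set g : ℕ → EuclideanSpace ℝ (Fin N) :=
          fun m => if m % 2 = 0 then f (m/2) else u (m/2) with hg
        have hg2 : ∀ k, g (2*k) = f k := by
          intro k
          have h1 : (2*k) % 2 = 0 := by omega
          have h2 : (2*k) / 2 = k := by omega
          simp [hg, h1, h2]
        have hg21 : ∀ k, g (2*k+1) = u k := by
          intro k
          have h1 : (2*k+1) % 2 = 1 := by omega
          have h2 : (2*k+1) / 2 = k := by omega
          simp [hg, h1, h2]
        refine ⟨g, ⟨?_, ?_, ?_⟩, hg2⟩
        · have := hg2 0
          simpa [hf.1] using this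
        · have h2 : (2:ℕ)^(n+1) = 2 * 2^n := by ring
          rw [h2, hg2]
          exact hf.2.1
        · intro m hm
          rcases Nat.even_or_odd m with ⟨k, hk⟩ | ⟨k, hk⟩
          · have hm' : m = 2*k := by omega
            have hk' : k < 2^n := by
              have : (2:ℕ)^(n+1) = 2 * 2^n := by ring
              omega
            rw [hm', hg2, hg21]
            exact (hu k hk').1
          · have hm' : m = 2*k+1 := by omega
            have hk' : k < 2^n := by
              have : (2:ℕ)^(n+1) = 2 * 2^n := by ring
              omega
            rw [hm', hg21, show 2*k+1+1 = 2*(k+1) by ring, hg2]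
            exact (hu k hk').2
      set next : ℕ → (ℕ → EuclideanSpace ℝ (Fin N)) → (ℕ → EuclideanSpace ℝ (Fin N)) :=
        fun n f => if h : Good n f then (step n f h).choose else f with hnext
      set d : ℕ → ℕ → EuclideanSpace ℝ (Fin N) :=
        fun n => Nat.rec (fun k => if k = 0 then x else y) next n with hd
      have hd0 : d 0 = fun k => if k = 0 then x else y := rfl
      have hdsucc : ∀ n, d (n+1) = next n (d n) := fun n => rfl
      have hgood : ∀ n, Good n (d n) := by
        intro n
        induction n with
        | zero =>
          refine ⟨by simp [hd0], by simp [hd0], ?_⟩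
          intro k hk
          interval_cases k
          simpa [hd0] using hxyz
        | succ n ih =>
          rw [hdsucc, hnext]
          simp only [dif_pos ih]
          exact (step n (d n) ih).choose_spec.1
      have hcons : ∀ n k, d (n+1) (2*k) = d n k := by
        intro n k
        rw [hdsucc, hnext]
        simp only [dif_pos (hgood n)]
        exact (step n (d n) (hgood n)).choose_spec.2 k
      exact ⟨d, fun n => hgood n, hcons⟩
    -- skeleton properties
    have hdx : ∀ n, d n 0 = x := fun n => (hgood n).1
    have hdy : ∀ n, d n (2^n) = y := fun n => (hgood n).2.1
    have hstep : ∀ n k, k < 2^n → (d n k, d n (k+1), t/2^n) ∈ Z :=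
      fun n k hk => (hgood n).2.2 k hk
    have hdK : ∀ n k, k ≤ 2^n → d n k ∈ K := by
      intro n k hk
      rcases eq_or_lt_of_le hk with rfl | hlt
      · have h1 : (2:ℕ)^n - 1 < 2^n := by
          have := Nat.one_le_two_pow (n := n)
          omega
        have := (hstepZ _ _ _ (hstep n (2^n - 1) h1)).2.1
        rwa [show 2^n - 1 + 1 = 2^n by have := Nat.one_le_two_pow (n := n); omega] at this
      · exact (hstepZ _ _ _ (hstep n k hlt)).1
    have hb1 : ∀ n k, k < 2^n → ‖d n (k+1) - d n k‖ ≤ t/2^n * C := by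
      intro n k hk
      have := (hstepZ _ _ _ (hstep n k hk)).2.2.2.1
      exact this
    have hb2 : ∀ n k, k < 2^n →
        ‖d n (k+1) - d n k - (t/2^n) • F (d n k)‖ ≤ (t/2^n)^2/2 * M := by
      intro n k hk
      have := (hstepZ _ _ _ (hstep n k hk)).2.2.2.2.1
      exact this
    obtain ⟨γ, hγc, hγ0, hγt, hγK, heq⟩ :=
      approx_limit hF.continuous hK htpos hC0 hM0 hCb hmodul hdx hdy hcons hdK hb1 hb2
    exact ⟨ht, γ, ⟨hγc, deriv_of_integral_eq hF.continuous hγc heq⟩, hγ0, hγt, hγK⟩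


/-- `Γ_K` is monotone, and for compact `K` the reachability set `R_K`
is the greatest fixpoint of `Γ_K`: it is a fixpoint and contains every post-fixpoint. -/
theorem reach_greatest_fixpoint {N : ℕ}
    (F : EuclideanSpace ℝ (Fin N) → EuclideanSpace ℝ (Fin N))
    (hF : ContDiff ℝ 1 F)
    (K : Set (EuclideanSpace ℝ (Fin N))) :
    Monotone (GammaK F K) ∧
    (IsCompact K →
      GammaK F K (RK F K) = RK F K ∧
      ∀ Z : Set (EuclideanSpace ℝ (Fin N) × EuclideanSpace ℝ (Fin N) × ℝ),
        Z ⊆ GammaK F K Z → Z ⊆ RK F K) := by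
  constructor
  · intro A B hAB p hp
    exact ⟨hp.1, hp.2.1, hp.2.2.1, hp.2.2.2.imp fun u hu => ⟨hAB hu.1, hAB hu.2⟩⟩
  · intro hK
    exact ⟨subset_antisymm (gamma_sub_rk hF K) (rk_sub_gamma hF K),
      fun Z hZ => coind hF hK hZ⟩


end ODEGfp
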